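/- The Nikulin lattice N = N_p is an even lattice, i.e. B(x,x) ∈ 2ℤ for every x ∈ N; moreover, every x ∈ N with B(x,x) = −2 lies in the ℤ-span of the basis vectors D_{i,j}. -/

import Mathlib

open scoped BigOperators

namespace Nikulin

noncomputable section

/-- Index set for the basis vectors `D_{i,j}`, `1 ≤ i ≤ ν`, `1 ≤ j ≤ p−1`. -/
abbrev Idx (p ν : ℕ) := Fin ν × Fin (p - 1)

variable (p ν : ℕ)

/-- The Gram matrix of the form `B` on the basis `D_{i,j}`:
`B(D_{i,j}, D_{i,j}) = −2`, `B(D_{i,j}, D_{i,j±1}) = 1`, all other entries `0`. -/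
def gram (a b : Idx p ν) : ℚ :=
  if a.1 = b.1 then
    if a.2 = b.2 then -2
    else if a.2.1 + 1 = b.2.1 ∨ b.2.1 + 1 = a.2.1 then 1 else 0
  else 0

/-- The symmetric bilinear form `B` on `V`, the bilinear extension of the Gram matrix. -/
def Bf : (Idx p ν → ℚ) →ₗ[ℚ] (Idx p ν → ℚ) →ₗ[ℚ] ℚ :=
  LinearMap.mk₂ ℚ (fun x y => ∑ a : Idx p ν, ∑ b : Idx p ν, x a * gram p ν a b * y b)
    (by
      intro x x' y
      rw [← Finset.sum_add_distrib]
      refine Finset.sum_congr rfl fun a _ => ?_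
      rw [← Finset.sum_add_distrib]
      refine Finset.sum_congr rfl fun b _ => ?_
      simp only [Pi.add_apply]; ring)
    (by
      intro c x y
      rw [Finset.smul_sum]
      refine Finset.sum_congr rfl fun a _ => ?_
      rw [Finset.smul_sum]
      refine Finset.sum_congr rfl fun b _ => ?_
      simp only [Pi.smul_apply, smul_eq_mul]; ring)
    (by
      intro x y y'
      rw [← Finset.sum_add_distrib]
      refine Finset.sum_congr rfl fun a _ => ?_
      rw [← Finset.sum_add_distrib]
      refine Finset.sum_congr rfl fun b _ => ?_
      simp only [Pi.add_apply]; ring)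
    (by
      intro c x y
      rw [Finset.smul_sum]
      refine Finset.sum_congr rfl fun a _ => ?_
      rw [Finset.smul_sum]
      refine Finset.sum_congr rfl fun b _ => ?_
      simp only [Pi.smul_apply, smul_eq_mul]; ring)

/-- The basis vector `D_{i,j}` (the index `q = (i, j)` with `j ∈ Fin (p−1)` representing
`j+1 ∈ {1, …, p−1}`). -/
def Dv (q : Idx p ν) : Idx p ν → ℚ := Pi.single q 1

variable (k : Fin ν → ℤ)

/-- The vector `ϖ = Σ_i (k_i/p) Σ_j j·D_{i,j}`. -/
def varpi : Idx p ν → ℚ := fun q => (k q.1 : ℚ) * ((q.2.1 : ℚ) + 1) / p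

/-- The Nikulin lattice `N_p`, generated by the `D_{i,j}` together with `ϖ`. -/
def NL : AddSubgroup (Idx p ν → ℚ) :=
  AddSubgroup.closure (Set.range (Dv p ν) ∪ {varpi p ν k})

/-- The Weyl vector `ϱ = −(1/2) Σ_i Σ_j j(p−j)·D_{i,j}`. -/
def rho : Idx p ν → ℚ :=
  fun q => -(((q.2.1 : ℚ) + 1) * ((p : ℚ) - ((q.2.1 : ℚ) + 1)) / 2)

/-- The lattice `L_p = {x ∈ N_p : B(ϱ, x) ∈ pℤ}`. -/
def LL : AddSubgroup (Idx p ν → ℚ) where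
  carrier := {x | x ∈ NL p ν k ∧ ∃ m : ℤ, Bf p ν (rho p ν) x = (p : ℚ) * m}
  zero_mem' := ⟨(NL p ν k).zero_mem, 0, by simp⟩
  add_mem' := by
    rintro a b ⟨haN, ma, hma⟩ ⟨hbN, mb, hmb⟩
    exact ⟨add_mem haN hbN, ma + mb, by rw [map_add, hma, hmb]; push_cast; ring⟩
  neg_mem' := by
    rintro a ⟨haN, ma, hma⟩
    exact ⟨neg_mem haN, -ma, by rw [map_neg, hma]; push_cast; ring⟩

/-- The dual lattice `S^∨ = {y ∈ V : B(y, s) ∈ ℤ for all s ∈ S}`. -/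
def dual (S : AddSubgroup (Idx p ν → ℚ)) : AddSubgroup (Idx p ν → ℚ) where
  carrier := {y | ∀ s ∈ S, ∃ m : ℤ, Bf p ν y s = (m : ℚ)}
  zero_mem' := by
    intro s hs
    exact ⟨0, by simp⟩
  add_mem' := by
    rintro a b ha hb s hs
    obtain ⟨ma, hma⟩ := ha s hs
    obtain ⟨mb, hmb⟩ := hb s hs
    exact ⟨ma + mb, by rw [map_add, LinearMap.add_apply, hma, hmb]; push_cast; ring⟩
  neg_mem' := by
    rintro a ha s hs
    obtain ⟨m, hm⟩ := ha s hs
    exact ⟨-m, by rw [map_neg, LinearMap.neg_apply, hm]; push_cast; ring⟩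

/-- The list of admissible data `(p, ν, k)`:
`(2, 8, (1,…,1))`, `(3, 6, (1,…,1))`, `(5, 4, (1,1,2,2))`, `(7, 3, (1,2,3))`. -/
def goodCase : Prop :=
  (p = 2 ∧ ∃ h : ν = 8, ∀ i, k i = ![1, 1, 1, 1, 1, 1, 1, 1] (Fin.cast h i)) ∨
  (p = 3 ∧ ∃ h : ν = 6, ∀ i, k i = ![1, 1, 1, 1, 1, 1] (Fin.cast h i)) ∨
  (p = 5 ∧ ∃ h : ν = 4, ∀ i, k i = ![1, 1, 2, 2] (Fin.cast h i)) ∨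
  (p = 7 ∧ ∃ h : ν = 3, ∀ i, k i = ![1, 2, 3] (Fin.cast h i))

end

end Nikulin

open Nikulin
namespace NikAux
open Nikulin Finset




lemma sq_int_ge (t : ℤ) : t ≤ t^2 := by nlinarith [sq_nonneg (t-1)]

lemma even_sq_sub (t : ℤ) : Even (t^2 - t) := by
  have h := Int.even_mul_succ_self (t - 1)
  have e : (t-1) * ((t-1)+1) = t^2 - t := by ring
  rwa [e] at h

lemma comp_bound (p : ℕ) (hp : 0 < p) (t : Fin p → ℤ) (s : ℤ)
    (h : ∑ m, t m = s) :
    (s % p) * (p - s % p) ≤ p * (∑ m, (t m)^2) - s^2 := by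
  set q := s / (p:ℤ) with hq
  set r := s % (p:ℤ) with hr
  have hs : (p:ℤ) * q + r = s := Int.mul_ediv_add_emod s p
  have h1 : ∑ m, (t m - q) = r := by
    rw [Finset.sum_sub_distrib, h, Finset.sum_const, Finset.card_univ, Fintype.card_fin]
    simp only [nsmul_eq_mul]
    linarith [hs]
  have h2 : r ≤ ∑ m, (t m - q)^2 := by
    rw [← h1]
    exact Finset.sum_le_sum fun m _ => sq_int_ge _
  have h3 : ∑ m, (t m - q)^2 = (∑ m, (t m)^2) - 2*q*s + p*q^2 := by
    have e : ∀ m : Fin p, (t m - q)^2 = (t m)^2 - 2*q*(t m) + q^2 := fun m => by ring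
    rw [Finset.sum_congr rfl (fun m _ => e m), Finset.sum_add_distrib,
      Finset.sum_sub_distrib, ← Finset.mul_sum, h, Finset.sum_const, Finset.card_univ,
      Fintype.card_fin]
    ring
  have h4 : (p:ℤ) * r ≤ p * ((∑ m, (t m)^2) - 2*q*s + p*q^2) := by
    rw [← h3]
    exact mul_le_mul_of_nonneg_left h2 (by positivity)
  have hs2 : s^2 = ((p:ℤ)*q+r)^2 := by rw [hs]
  have hqs : q*s = q*((p:ℤ)*q+r) := by rw [hs]
  nlinarith [h4, hs2, hqs]






lemma lemC (n : ℕ) (W : ℕ → ℚ) (hW : ∀ m, n ≤ m → W m = 0) :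
    ∑ j ∈ range n, ∑ j' ∈ range n,
      W j * (if j = j' then (-2:ℚ) else if j+1 = j' ∨ j'+1 = j then 1 else 0) * W j'
    = ∑ j ∈ range n, (-2 * W j ^ 2 + 2 * W j * W (j+1)) := by
  have inner : ∀ j ∈ range n,
      (∑ j' ∈ range n,
        W j * (if j = j' then (-2:ℚ) else if j+1 = j' ∨ j'+1 = j then 1 else 0) * W j')
      = (-2 * W j ^ 2 + W j * W (j+1)) + (if j = 0 then 0 else W j * W (j-1)) := by
    intro j hj
    have hsplit : ∀ j' : ℕ,
        W j * (if j = j' then (-2:ℚ) else if j+1 = j' ∨ j'+1 = j then 1 else 0) * W j'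
        = ((if j' = j then -2 * W j * W j' else 0)
          + (if j' = j + 1 then W j * W j' else 0))
          + (if j' + 1 = j then W j * W j' else 0) := by
      intro j'
      rcases eq_or_ne j j' with h1 | h1
      · subst h1
        rw [if_pos rfl, if_pos rfl, if_neg (by omega), if_neg (by omega)]
        ring
      · rw [if_neg h1, if_neg (Ne.symm h1)]
        by_cases h2 : j + 1 = j'
        · rw [if_pos (Or.inl h2), if_pos h2.symm, if_neg (by omega)]
          ring
        · rw [if_neg (Ne.symm h2)]
          by_cases h3 : j' + 1 = j
          · rw [if_pos (Or.inr h3), if_pos h3]; ring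
          · rw [if_neg (by tauto), if_neg h3]; ring
    rw [Finset.sum_congr rfl (fun j' _ => hsplit j'), Finset.sum_add_distrib,
      Finset.sum_add_distrib]
    congr 1
    · congr 1
      · rw [Finset.sum_ite_eq' (range n) j, if_pos hj]; ring
      · rw [Finset.sum_ite_eq' (range n) (j+1)]
        by_cases h : j + 1 ∈ range n
        · rw [if_pos h]
        · rw [if_neg h, hW (j+1) (by simpa using h)]
          ring
    · by_cases hj0 : j = 0
      · subst hj0
        rw [if_pos rfl]
        apply Finset.sum_eq_zero
        intro j' _
        rw [if_neg (by omega)]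
      · have hcond : ∀ j' : ℕ, (j' + 1 = j) = (j' = j - 1) := by
          intro j'; apply propext; omega
        simp only [hcond]
        rw [Finset.sum_ite_eq' (range n) (j-1), if_pos (by simp at hj ⊢; omega),
          if_neg hj0]
  rw [Finset.sum_congr rfl inner, Finset.sum_add_distrib]
  have third : ∑ j ∈ range n, (if j = 0 then (0:ℚ) else W j * W (j-1))
      = ∑ j ∈ range n, W j * W (j+1) := by
    cases n with
    | zero => simp
    | succ n' =>
      rw [Finset.sum_range_succ' (fun j => if j = 0 then (0:ℚ) else W j * W (j-1)) n']
      rw [Finset.sum_range_succ (fun j => W j * W (j+1)) n']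
      rw [hW (n'+1) (by omega)]
      simp [mul_comm]
  rw [third, ← Finset.sum_add_distrib]
  apply Finset.sum_congr rfl
  intro j _
  ring

lemma lemA (n : ℕ) (W : ℕ → ℚ) (hW : W n = 0) :
    ∑ j ∈ range n, (-2 * W j ^ 2 + 2 * W j * W (j+1))
      = -∑ m ∈ range (n+1), (W m - (if m = 0 then (0:ℚ) else W (m-1)))^2 := by
  have e : ∀ m : ℕ, (W m - (if m = 0 then (0:ℚ) else W (m-1)))^2
      = (W m ^2 - 2*(W m * (if m = 0 then (0:ℚ) else W (m-1))))
        + (if m = 0 then (0:ℚ) else W (m-1))^2 := fun m => by ring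
  have e1 : ∑ m ∈ range (n+1), W m ^ 2 = ∑ m ∈ range n, W m ^ 2 := by
    rw [Finset.sum_range_succ, hW]; ring_nf
  have e2 : ∑ m ∈ range (n+1), (if m = 0 then (0:ℚ) else W (m-1))^2
      = ∑ m ∈ range n, W m ^ 2 := by
    rw [Finset.sum_range_succ' (fun m => (if m = 0 then (0:ℚ) else W (m-1))^2) n]
    simp
  have e3 : ∑ m ∈ range (n+1), W m * (if m = 0 then (0:ℚ) else W (m-1))
      = ∑ m ∈ range n, W m * W (m+1) := by
    rw [Finset.sum_range_succ' (fun m => W m * (if m = 0 then (0:ℚ) else W (m-1))) n]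
    simp [mul_comm]
  have E : ∑ m ∈ range (n+1), (W m - (if m = 0 then (0:ℚ) else W (m-1)))^2
      = (∑ m ∈ range n, W m ^ 2) * 2 - 2 * ∑ m ∈ range n, W m * W (m+1) := by
    rw [Finset.sum_congr rfl (fun m _ => e m), Finset.sum_add_distrib,
      Finset.sum_sub_distrib, e1, e2, ← Finset.mul_sum, e3]
    ring
  have L2 : ∑ j ∈ range n, (2 * W j * W (j+1)) = 2 * ∑ j ∈ range n, W j * W (j+1) := by
    rw [Finset.mul_sum]; exact Finset.sum_congr rfl fun j _ => by ring
  rw [E, Finset.sum_add_distrib, L2, ← Finset.mul_sum]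
  ring



lemma bf_formula (p ν : ℕ) (hp : 2 ≤ p) (k : Fin ν → ℤ) (c : ℤ) (d : Idx p ν → ℤ) :
    ∃ t : Fin ν → Fin p → ℤ,
      (∀ i, ∑ m, t i m = c * k i) ∧
      (p : ℚ) * Bf p ν (fun q => (c : ℚ) * varpi p ν k q + (d q : ℚ))
          (fun q => (c : ℚ) * varpi p ν k q + (d q : ℚ))
        = ∑ i : Fin ν, (((c * k i : ℤ) : ℚ)^2 - (p:ℚ) * ∑ m : Fin p, ((t i m : ℤ) : ℚ)^2) := by
  have hp0 : (p:ℚ) ≠ 0 := by positivity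
  set n := p - 1 with hn
  have hpn : p = n + 1 := by omega
  have hn1 : 1 ≤ n := by omega
  set x : Idx p ν → ℚ := fun q => (c : ℚ) * varpi p ν k q + (d q : ℚ) with hx
  set D : Fin ν → ℕ → ℤ := fun i m => if h : m < n then d (i, ⟨m, h⟩) else 0 with hD
  set T : Fin ν → ℕ → ℤ :=
    fun i m => (if 1 ≤ m then D i (m-1) else 0) - D i m + (if m = n then c * k i else 0) with hT
  set W : Fin ν → ℕ → ℚ := fun i m => if h : m < n then x (i, ⟨m, h⟩) else 0 with hW
  have hDn : ∀ i, D i n = 0 := fun i => dif_neg (by omega)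
  have hWn : ∀ i m, n ≤ m → W i m = 0 := fun i m hm => dif_neg (by omega)
  -- sum of T over range p
  have hTsum : ∀ i, ∑ m ∈ range p, T i m = c * k i := by
    intro i
    rw [hpn]
    have : ∀ m : ℕ, T i m = ((if 1 ≤ m then D i (m-1) else 0) - D i m)
        + (if m = n then c * k i else 0) := fun m => rfl
    rw [Finset.sum_congr rfl (fun m _ => this m), Finset.sum_add_distrib,
      Finset.sum_sub_distrib]
    have hA : ∑ m ∈ range (n+1), (if 1 ≤ m then D i (m-1) else 0) = ∑ m ∈ range n, D i m := by
      rw [Finset.sum_range_succ' (fun m => if 1 ≤ m then D i (m-1) else 0) n]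
      simp
    have hB : ∑ m ∈ range (n+1), D i m = ∑ m ∈ range n, D i m := by
      rw [Finset.sum_range_succ, hDn]; ring_nf
    have hC : ∑ m ∈ range (n+1), (if m = n then c * k i else 0) = c * k i := by
      rw [Finset.sum_ite_eq' (range (n+1)) n, if_pos (by simp)]
    rw [hA, hB, hC]
    ring
  -- value of W below n
  have hWval : ∀ (i : Fin ν) (m : ℕ) (hm : m < n),
      W i m = (c:ℚ) * ((k i : ℚ) * ((m:ℚ)+1) / p) + (D i m : ℚ) := by
    intro i m hm
    rw [hW]
    dsimp only
    rw [dif_pos hm, hx]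
    dsimp only
    rw [hD]
    dsimp only
    rw [dif_pos hm]
    rfl
  -- step 1 : collapse to components and nat sums
  have hWvalFin : ∀ (i : Fin ν) (j : Fin (p-1)), W i j.1 = x (i, j) := by
    intro i j
    rw [hW]
    dsimp only
    rw [dif_pos j.isLt]
  have collapse : ∀ a : Idx p ν, (∑ b : Idx p ν, x a * gram p ν a b * x b)
      = ∑ j' : Fin (p-1), x a *
          (if a.2 = j' then (-2:ℚ) else if a.2.1+1 = j'.1 ∨ j'.1+1 = a.2.1 then 1 else 0)
          * x (a.1, j') := by
    intro a
    rw [Fintype.sum_prod_type, Finset.sum_comm]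
    refine Finset.sum_congr rfl fun j' _ => ?_
    have key : ∀ i' : Fin ν, x a * gram p ν a (i', j') * x (i', j')
        = if a.1 = i' then x a *
            (if a.2 = j' then (-2:ℚ) else if a.2.1+1 = j'.1 ∨ j'.1+1 = a.2.1 then 1 else 0)
            * x (i', j') else 0 := by
      intro i'
      show x a * (if a.1 = i' then _ else 0) * x (i', j') = _
      by_cases h : a.1 = i'
      · rw [if_pos h, if_pos h]
      · rw [if_neg h, if_neg h]; ring
    rw [Finset.sum_congr rfl fun i' _ => key i',
      Finset.sum_ite_eq Finset.univ a.1, if_pos (Finset.mem_univ _)]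
  have S1 : Bf p ν x x = ∑ i : Fin ν, ∑ j ∈ range n, ∑ j' ∈ range n,
      W i j * (if j = j' then (-2:ℚ) else if j+1 = j' ∨ j'+1 = j then 1 else 0) * W i j' := by
    show (∑ a : Idx p ν, ∑ b : Idx p ν, x a * gram p ν a b * x b) = _
    rw [Finset.sum_congr rfl fun a _ => collapse a, Fintype.sum_prod_type]
    refine Finset.sum_congr rfl fun i _ => ?_
    have inner : ∀ j : Fin (p-1),
        (∑ j' : Fin (p-1), x (i, j) *
          (if j = j' then (-2:ℚ) else if j.1+1 = j'.1 ∨ j'.1+1 = j.1 then 1 else 0)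
          * x (i, j'))
        = ∑ j' ∈ range n, W i j.1 *
            (if j.1 = j' then (-2:ℚ) else if j.1+1 = j' ∨ j'+1 = j.1 then 1 else 0) * W i j' := by
      intro j
      rw [← Fin.sum_univ_eq_sum_range (fun m' => W i j.1 *
        (if j.1 = m' then (-2:ℚ) else if j.1+1 = m' ∨ m'+1 = j.1 then 1 else 0) * W i m') n]
      refine Finset.sum_congr rfl fun j' _ => ?_
      rw [hWvalFin i j, hWvalFin i j']
      congr 1
      congr 1
      simp only [Fin.ext_iff]
    rw [Finset.sum_congr rfl fun j _ => inner j]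
    exact Fin.sum_univ_eq_sum_range (fun m => ∑ j' ∈ range n, W i m *
      (if m = j' then (-2:ℚ) else if m+1 = j' ∨ j'+1 = m then 1 else 0) * W i j') n
  -- apply lemC and lemA
  have S2 : Bf p ν x x = ∑ i : Fin ν,
      -∑ m ∈ range (n+1), (W i m - (if m = 0 then (0:ℚ) else W i (m-1)))^2 := by
    rw [S1]
    refine Finset.sum_congr rfl fun i _ => ?_
    rw [lemC n (W i) (hWn i), lemA n (W i) (hWn i n le_rfl)]
  -- pointwise identification with T
  have hy : ∀ (i : Fin ν), ∀ m ∈ range (n+1),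
      W i m - (if m = 0 then (0:ℚ) else W i (m-1))
        = ((c * k i : ℤ) : ℚ)/(p:ℚ) - ((T i m : ℤ) : ℚ) := by
    intro i m hm
    have hmn : m ≤ n := by simpa [Nat.lt_succ_iff] using hm
    rcases Nat.eq_zero_or_pos m with h0 | h1
    · subst h0
      rw [if_pos rfl, hWval i 0 (by omega)]
      have : T i 0 = -D i 0 := by
        rw [hT]; dsimp only
        rw [if_neg (by omega), if_neg (by omega)]
        ring
      rw [this]
      push_cast
      field_simp
      ring
    · rcases Nat.lt_or_ge m n with hmlt | hmge
      · -- 1 ≤ m < n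
        rw [if_neg (by omega), hWval i m hmlt, hWval i (m-1) (by omega)]
        have hT' : T i m = D i (m-1) - D i m := by
          rw [hT]; dsimp only
          rw [if_pos (show 1 ≤ m by omega), if_neg (show ¬ m = n by omega)]
          ring
        rw [hT']
        have hm1 : ((m-1 : ℕ) : ℚ) = (m : ℚ) - 1 := by
          rw [Nat.cast_sub (by omega)]
          norm_num
        rw [hm1]
        push_cast
        field_simp
        ring
      · -- m = n
        have hmeq : m = n := by omega
        subst hmeq
        rw [if_neg (by omega), hWn i n le_rfl, hWval i (n-1) (by omega)]
        have hT' : T i n = D i (n-1) + c * k i := by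
          rw [hT]; dsimp only
          rw [if_pos hn1, if_pos rfl, hDn]
          ring
        rw [hT']
        have hm1 : ((n-1 : ℕ) : ℚ) = (n : ℚ) - 1 := by
          rw [Nat.cast_sub (by omega)]
          norm_num
        have hnq : (n : ℚ) = (p : ℚ) - 1 := by
          rw [hn, Nat.cast_sub (by omega)]
          norm_num
        rw [hm1, hnq]
        push_cast
        field_simp
        ring
  refine ⟨fun i m => T i m.1, fun i => ?_, ?_⟩
  · rw [Fin.sum_univ_eq_sum_range (fun m => T i m) p]
    exact hTsum i
  · rw [S2, Finset.mul_sum]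
    refine Finset.sum_congr rfl fun i _ => ?_
    dsimp only
    have hsq : ∑ m ∈ range (n+1), (W i m - (if m = 0 then (0:ℚ) else W i (m-1)))^2
        = ∑ m ∈ range (n+1), (((c * k i : ℤ) : ℚ)/(p:ℚ) - ((T i m : ℤ) : ℚ))^2 :=
      Finset.sum_congr rfl (fun m hm => by rw [hy i m hm])
    rw [hsq]
    have hTsumQ : ∑ m ∈ range p, ((T i m : ℤ) : ℚ) = ((c * k i : ℤ) : ℚ) := by
      rw [← Int.cast_sum, hTsum i]
    have htq : ∑ m : Fin p, ((T i m.1 : ℤ) : ℚ)^2 = ∑ m ∈ range p, ((T i m : ℤ) : ℚ)^2 :=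
      Fin.sum_univ_eq_sum_range (fun m => ((T i m : ℤ) : ℚ)^2) p
    rw [htq]
    have expand : ∀ m : ℕ, (((c * k i : ℤ) : ℚ)/(p:ℚ) - ((T i m : ℤ) : ℚ))^2
        = (((c * k i : ℤ) : ℚ)/(p:ℚ))^2
          - 2*(((c * k i : ℤ) : ℚ)/(p:ℚ))*((T i m : ℤ) : ℚ) + ((T i m : ℤ) : ℚ)^2 :=
      fun m => by ring
    rw [show n + 1 = p from hpn.symm]
    rw [Finset.sum_congr rfl fun m _ => expand m, Finset.sum_add_distrib,
      Finset.sum_sub_distrib, Finset.sum_const, Finset.card_range, ← Finset.mul_sum, hTsumQ]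
    push_cast
    field_simp
    have hpp : (p:ℚ)^2 * ((p:ℚ)⁻¹)^2 = 1 := by rw [← mul_pow, mul_inv_cancel₀ hp0, one_pow]
    linear_combination (-(c:ℚ)^2 * (k i:ℚ)^2) * hpp

lemma mem_NL_elim {p ν : ℕ} {k : Fin ν → ℤ} {x : Idx p ν → ℚ} (hx : x ∈ NL p ν k) :
    ∃ (c : ℤ) (d : Idx p ν → ℤ), x = fun q => (c:ℚ) * varpi p ν k q + (d q : ℚ) := by
  induction hx using AddSubgroup.closure_induction with
  | mem y hy =>
      rcases hy with ⟨q0, rfl⟩ | hy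
      · refine ⟨0, Pi.single q0 1, ?_⟩
        funext q
        by_cases h : q = q0 <;> simp [Dv, Pi.single_apply, h]
      · rw [Set.mem_singleton_iff] at hy
        subst hy
        exact ⟨1, 0, by funext q; simp⟩
  | zero => exact ⟨0, 0, by funext q; simp⟩
  | add a b ha hb iha ihb =>
      obtain ⟨c1, d1, rfl⟩ := iha
      obtain ⟨c2, d2, rfl⟩ := ihb
      refine ⟨c1 + c2, d1 + d2, ?_⟩
      funext q
      push_cast
      simp only [Pi.add_apply]
      push_cast
      ring
  | neg a ha iha =>
      obtain ⟨c1, d1, rfl⟩ := iha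
      refine ⟨-c1, -d1, ?_⟩
      funext q
      simp only [Pi.neg_apply]
      push_cast
      ring

lemma int_valued_mem (p ν : ℕ) (d : Idx p ν → ℤ) :
    (fun q => (d q : ℚ)) ∈ AddSubgroup.closure (Set.range (Dv p ν)) := by
  have key : (fun q => (d q : ℚ)) = ∑ q0 : Idx p ν, d q0 • Dv p ν q0 := by
    funext q
    rw [Finset.sum_apply]
    simp [Dv, Pi.single_apply, smul_ite, Finset.sum_ite_eq]
  rw [key]
  apply AddSubgroup.sum_mem
  intro q0 _
  exact AddSubgroup.zsmul_mem _ (AddSubgroup.subset_closure (Set.mem_range_self q0)) _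

lemma good_facts (p ν : ℕ) (k : Fin ν → ℤ) (hk : goodCase p ν k) :
    2 ≤ p ∧ ∃ e : ℤ, Even e ∧ (∑ i, (k i)^2) = (p:ℤ) * e ∧ Even (∑ i, k i) ∧
      ∀ c : ℤ, ¬ ((p:ℤ) ∣ c) →
        2*(p:ℤ)+1 ≤ ∑ i, ((c * k i) % (p:ℤ)) * ((p:ℤ) - (c * k i) % (p:ℤ)) := by
  rcases hk with ⟨rfl, h, hkk⟩ | ⟨rfl, h, hkk⟩ | ⟨rfl, h, hkk⟩ | ⟨rfl, h, hkk⟩ <;> subst h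
  · -- p = 2
    have hkk' : ∀ i : Fin 8, k i = ![1,1,1,1,1,1,1,1] i := fun i => by
      rw [hkk i]; rfl
    refine ⟨by norm_num, 4, ⟨2, by norm_num⟩, ?_, ?_, ?_⟩
    · norm_num [Fin.sum_univ_succ, hkk']
    · have hks : (∑ i, k i) = 8 := by norm_num [Fin.sum_univ_succ, hkk']
      rw [hks]; exact ⟨4, by norm_num⟩
    · intro c hpc
      have hsum : (∑ i : Fin 8, ((c * k i) % 2) * ((2:ℤ) - (c * k i) % 2))
          = 8 * ((c % 2) * (2 - c % 2)) := by
        norm_num [Fin.sum_univ_succ, hkk']; ring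
      have h1 : c % 2 = 1 := by omega
      push_cast
      rw [hsum, h1]; norm_num
  · -- p = 3
    have hkk' : ∀ i : Fin 6, k i = ![1,1,1,1,1,1] i := fun i => by
      rw [hkk i]; rfl
    refine ⟨by norm_num, 2, ⟨1, by norm_num⟩, ?_, ?_, ?_⟩
    · norm_num [Fin.sum_univ_succ, hkk']
    · have hks : (∑ i, k i) = 6 := by norm_num [Fin.sum_univ_succ, hkk']
      rw [hks]; exact ⟨3, by norm_num⟩
    · intro c hpc
      have hsum : (∑ i : Fin 6, ((c * k i) % 3) * ((3:ℤ) - (c * k i) % 3))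
          = 6 * ((c % 3) * (3 - c % 3)) := by
        norm_num [Fin.sum_univ_succ, hkk']; ring
      have h1 : c % 3 = 1 ∨ c % 3 = 2 := by omega
      push_cast
      rcases h1 with h1 | h1 <;> rw [hsum, h1] <;> norm_num
  · -- p = 5
    have hkk' : ∀ i : Fin 4, k i = ![1,1,2,2] i := fun i => by
      rw [hkk i]; rfl
    refine ⟨by norm_num, 2, ⟨1, by norm_num⟩, ?_, ?_, ?_⟩
    · norm_num [Fin.sum_univ_succ, hkk']
    · have hks : (∑ i, k i) = 6 := by norm_num [Fin.sum_univ_succ, hkk']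
      rw [hks]; exact ⟨3, by norm_num⟩
    · intro c hpc
      have hsum : (∑ i : Fin 4, ((c * k i) % 5) * ((5:ℤ) - (c * k i) % 5))
          = 2 * ((c % 5) * (5 - c % 5)) + 2 * (((c * 2) % 5) * (5 - (c * 2) % 5)) := by
        norm_num [Fin.sum_univ_succ, hkk']; ring
      have h1 : c % 5 = 1 ∨ c % 5 = 2 ∨ c % 5 = 3 ∨ c % 5 = 4 := by omega
      push_cast
      rcases h1 with h1 | h1 | h1 | h1
      · have h2 : (c * 2) % 5 = 2 := by omega
        rw [hsum, h1, h2]; norm_num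
      · have h2 : (c * 2) % 5 = 4 := by omega
        rw [hsum, h1, h2]; norm_num
      · have h2 : (c * 2) % 5 = 1 := by omega
        rw [hsum, h1, h2]; norm_num
      · have h2 : (c * 2) % 5 = 3 := by omega
        rw [hsum, h1, h2]; norm_num
  · -- p = 7
    have hkk' : ∀ i : Fin 3, k i = ![1,2,3] i := fun i => by
      rw [hkk i]; rfl
    refine ⟨by norm_num, 2, ⟨1, by norm_num⟩, ?_, ?_, ?_⟩
    · norm_num [Fin.sum_univ_succ, hkk']
    · have hks : (∑ i, k i) = 6 := by norm_num [Fin.sum_univ_succ, hkk']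
      rw [hks]; exact ⟨3, by norm_num⟩
    · intro c hpc
      have hsum : (∑ i : Fin 3, ((c * k i) % 7) * ((7:ℤ) - (c * k i) % 7))
          = ((c % 7) * (7 - c % 7)) + (((c * 2) % 7) * (7 - (c * 2) % 7))
            + (((c * 3) % 7) * (7 - (c * 3) % 7)) := by
        norm_num [Fin.sum_univ_succ, hkk']; ring
      have h1 : c % 7 = 1 ∨ c % 7 = 2 ∨ c % 7 = 3 ∨ c % 7 = 4 ∨ c % 7 = 5 ∨ c % 7 = 6 := by
        omega
      push_cast
      rcases h1 with h1 | h1 | h1 | h1 | h1 | h1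
      · have h2 : (c * 2) % 7 = 2 := by omega
        have h3 : (c * 3) % 7 = 3 := by omega
        rw [hsum, h1, h2, h3]; norm_num
      · have h2 : (c * 2) % 7 = 4 := by omega
        have h3 : (c * 3) % 7 = 6 := by omega
        rw [hsum, h1, h2, h3]; norm_num
      · have h2 : (c * 2) % 7 = 6 := by omega
        have h3 : (c * 3) % 7 = 2 := by omega
        rw [hsum, h1, h2, h3]; norm_num
      · have h2 : (c * 2) % 7 = 1 := by omega
        have h3 : (c * 3) % 7 = 5 := by omega
        rw [hsum, h1, h2, h3]; norm_num
      · have h2 : (c * 2) % 7 = 3 := by omega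
        have h3 : (c * 3) % 7 = 1 := by omega
        rw [hsum, h1, h2, h3]; norm_num
      · have h2 : (c * 2) % 7 = 5 := by omega
        have h3 : (c * 3) % 7 = 4 := by omega
        rw [hsum, h1, h2, h3]; norm_num

end NikAux

open Nikulin

/-- The Nikulin lattice `N_p` is even, and every `(−2)`-vector of `N_p` lies in the `ℤ`-span of the basis vectors `D_{i,j}`. -/
theorem nikulinLattice_even_and_rootsInD (p ν : ℕ) (k : Fin ν → ℤ) (hk : goodCase p ν k) :
    (∀ x ∈ NL p ν k, ∃ m : ℤ, Bf p ν x x = 2 * m) ∧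
    (∀ x ∈ NL p ν k, Bf p ν x x = -2 → x ∈ AddSubgroup.closure (Set.range (Dv p ν))) := by
  obtain ⟨hp2, e, he, hk2, hks, hbound⟩ := NikAux.good_facts p ν k hk
  have hppos : 0 < p := by omega
  have hp0 : (p:ℚ) ≠ 0 := by exact_mod_cast hppos.ne'
  have key : ∀ (c : ℤ) (d : Idx p ν → ℤ), ∃ t : Fin ν → Fin p → ℤ,
      (∀ i, ∑ m, t i m = c * k i) ∧
      Bf p ν (fun q => (c:ℚ) * varpi p ν k q + (d q : ℚ))
        (fun q => (c:ℚ) * varpi p ν k q + (d q : ℚ))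
        = ((c^2 * e - ∑ i : Fin ν, ∑ m : Fin p, (t i m)^2 : ℤ) : ℚ) := by
    intro c d
    obtain ⟨t, ht, hB⟩ := NikAux.bf_formula p ν hp2 k c d
    refine ⟨t, ht, ?_⟩
    have hz : (∑ i : Fin ν, ((c * k i)^2 - (p:ℤ) * ∑ m : Fin p, (t i m)^2))
        = (p:ℤ) * (c^2 * e - ∑ i : Fin ν, ∑ m : Fin p, (t i m)^2) := by
      rw [Finset.sum_sub_distrib, ← Finset.mul_sum]
      have h1 : ∑ i : Fin ν, (c * k i)^2 = c^2 * ∑ i, (k i)^2 := by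
        rw [Finset.mul_sum]
        exact Finset.sum_congr rfl fun i _ => by ring
      rw [h1, hk2]
      ring
    have hcast : (((∑ i : Fin ν, ((c * k i)^2 - (p:ℤ) * ∑ m : Fin p, (t i m)^2)) : ℤ) : ℚ)
        = ∑ i : Fin ν, (((c * k i : ℤ):ℚ)^2 - (p:ℚ) * ∑ m : Fin p, ((t i m : ℤ):ℚ)^2) := by
      push_cast
      ring
    apply mul_left_cancel₀ hp0
    rw [hB, ← hcast, hz]
    push_cast
    ring
  constructor
  · -- evenness
    intro x hx
    obtain ⟨c, d, rfl⟩ := NikAux.mem_NL_elim hx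
    obtain ⟨t, ht, hB⟩ := key c d
    have hTtot : ∑ i : Fin ν, ∑ m : Fin p, t i m = c * ∑ i, k i := by
      rw [Finset.mul_sum]
      exact Finset.sum_congr rfl fun i _ => ht i
    have hevenS : (2:ℤ) ∣ ((∑ i : Fin ν, ∑ m : Fin p, (t i m)^2)
        - ∑ i : Fin ν, ∑ m : Fin p, t i m) := by
      have hrw : (∑ i : Fin ν, ∑ m : Fin p, (t i m)^2) - ∑ i : Fin ν, ∑ m : Fin p, t i m
          = ∑ i : Fin ν, ∑ m : Fin p, ((t i m)^2 - t i m) := by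
        rw [← Finset.sum_sub_distrib]
        exact Finset.sum_congr rfl fun i _ => by rw [← Finset.sum_sub_distrib]
      rw [hrw]
      refine Finset.dvd_sum fun i _ => Finset.dvd_sum fun m _ => ?_
      obtain ⟨r, hr⟩ := NikAux.even_sq_sub (t i m)
      exact ⟨r, by omega⟩
    have h2T : (2:ℤ) ∣ ∑ i : Fin ν, ∑ m : Fin p, t i m := by
      rw [hTtot]
      obtain ⟨u, hu⟩ := hks
      exact ⟨c * u, by rw [hu]; ring⟩
    have h2S : (2:ℤ) ∣ ∑ i : Fin ν, ∑ m : Fin p, (t i m)^2 := by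
      obtain ⟨a, ha⟩ := hevenS
      obtain ⟨b, hb⟩ := h2T
      exact ⟨a + b, by omega⟩
    have h2e : (2:ℤ) ∣ c^2 * e := by
      obtain ⟨u, hu⟩ := he
      exact ⟨c^2 * u, by rw [hu]; ring⟩
    obtain ⟨w, hw⟩ : (2:ℤ) ∣ (c^2 * e - ∑ i : Fin ν, ∑ m : Fin p, (t i m)^2) :=
      dvd_sub h2e h2S
    refine ⟨w, ?_⟩
    rw [hB, hw]
    push_cast
    ring
  · -- roots
    intro x hx hroot
    obtain ⟨c, d, rfl⟩ := NikAux.mem_NL_elim hx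
    obtain ⟨t, ht, hB⟩ := key c d
    have hint : c^2 * e - (∑ i : Fin ν, ∑ m : Fin p, (t i m)^2) = -2 := by
      exact_mod_cast hB.symm.trans hroot
    by_cases hpc : (p:ℤ) ∣ c
    · obtain ⟨c', rfl⟩ := hpc
      have hfun : (fun q : Idx p ν => (((p:ℤ) * c' : ℤ):ℚ) * varpi p ν k q + (d q : ℚ))
          = fun q : Idx p ν => ((c' * k q.1 * ((q.2.1 : ℤ) + 1) + d q : ℤ) : ℚ) := by
        funext q
        show (((p:ℤ) * c' : ℤ):ℚ) * ((k q.1 : ℚ) * ((q.2.1 : ℚ) + 1) / p) + (d q : ℚ) = _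
        push_cast
        field_simp
      rw [hfun]
      exact NikAux.int_valued_mem p ν _
    · exfalso
      have hsum := Finset.sum_le_sum
        (fun i (_ : i ∈ Finset.univ) => NikAux.comp_bound p hppos (t i) (c * k i) (ht i))
      have hRHS : (∑ i : Fin ν, ((p:ℤ) * (∑ m : Fin p, (t i m)^2) - (c * k i)^2))
          = (p:ℤ) * (∑ i : Fin ν, ∑ m : Fin p, (t i m)^2) - c^2 * ((p:ℤ) * e) := by
        rw [Finset.sum_sub_distrib, ← Finset.mul_sum]
        have h1 : ∑ i : Fin ν, (c * k i)^2 = c^2 * ∑ i, (k i)^2 := by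
          rw [Finset.mul_sum]
          exact Finset.sum_congr rfl fun i _ => by ring
        rw [h1, hk2]
      have hbnd := hbound c hpc
      have hval : (p:ℤ) * (∑ i : Fin ν, ∑ m : Fin p, (t i m)^2) - c^2 * ((p:ℤ) * e)
          = 2 * p := by
        have h2 : (∑ i : Fin ν, ∑ m : Fin p, (t i m)^2) - c^2 * e = 2 := by omega
        linear_combination (p:ℤ) * h2
      rw [hRHS, hval] at hsum
      linarith
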